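/- Let c_F, c_{FL}, ρ, ς², ς̂² > 0, w_d ∈ (−1,1), a_F > 0, and set b_F = (ς² c_{FL} + ς̂² c_F ρ)/(c_{FL} + c_F ρ). Then the function f_{F,∞}(w) = (a_F/(1−w²)²) · exp( −(2/b_F) ∫₀^w (z−w_d)/(1−z²)² dz ), defined for w ∈ (−1,1), satisfies the stationary Fokker–Planck equation (1/c_F + ρ/c_{FL})(w_d − w) f_{F,∞}(w) = (1/2)(ς²/c_F + ς̂² ρ/c_{FL}) · d/dw [ (1−w²)² f_{F,∞}(w) ] for all w ∈ (−1,1). -/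
import Mathlib


open Set MeasureTheory intervalIntegral

/-- Explicit steady state of the followers' (and, with other parameters,
leaders') Fokker-Planck equation. -/
noncomputable def steadyState (a bcoef wd : ℝ) (w : ℝ) : ℝ :=
  a/(1 - w^2)^2 * Real.exp (-(2/bcoef) * ∫ z in (0:ℝ)..w, (z - wd)/(1 - z^2)^2)

/-- the explicit profile `f_{F,∞}` solves the stationary
Fokker-Planck equation of the followers on `(-1,1)`. -/
theorem followers_steady_state
    (cF cFL ρ ς2 ςh2 : ℝ) (hcF : 0 < cF) (hcFL : 0 < cFL) (hρ : 0 < ρ)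
    (hς2 : 0 < ς2) (hςh2 : 0 < ςh2)
    (wd : ℝ) (hwd : wd ∈ Ioo (-1:ℝ) 1)
    (aF : ℝ) (haF : 0 < aF)
    (bF : ℝ) (hbF : bF = (ς2*cFL + ςh2*cF*ρ)/(cFL + cF*ρ)) :
    ∀ w ∈ Ioo (-1:ℝ) 1,
      DifferentiableAt ℝ (fun x => (1 - x^2)^2 * steadyState aF bF wd x) w
      ∧ (1/cF + ρ/cFL)*(wd - w)*(steadyState aF bF wd w)
        = (1/2)*(ς2/cF + ςh2*ρ/cFL)
          * deriv (fun x => (1 - x^2)^2 * steadyState aF bF wd x) w := by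
  have hbF0 : 0 < bF := by
    rw [hbF]; positivity
  intro w hw
  obtain ⟨hw1, hw2⟩ := hw
  have hIoo_open : IsOpen (Ioo (-1:ℝ) 1) := isOpen_Ioo
  have hgcont : ContinuousOn (fun z : ℝ => (z - wd)/(1 - z^2)^2) (Ioo (-1:ℝ) 1) := by
    apply ContinuousOn.div (by fun_prop) (by fun_prop)
    intro z hz
    have : 0 < 1 - z^2 := by nlinarith [hz.1, hz.2]
    positivity
  have hsub : uIcc (0:ℝ) w ⊆ Ioo (-1:ℝ) 1 :=
    Set.ordConnected_Ioo.uIcc_subset (by norm_num) ⟨hw1, hw2⟩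
  have hI : IntervalIntegrable (fun z : ℝ => (z - wd)/(1 - z^2)^2) volume 0 w :=
    (hgcont.mono hsub).intervalIntegrable
  have hwmem : w ∈ Ioo (-1:ℝ) 1 := ⟨hw1, hw2⟩
  have hderivInt : HasDerivAt (fun u => ∫ z in (0:ℝ)..u, (z - wd)/(1 - z^2)^2)
      ((w - wd)/(1 - w^2)^2) w :=
    intervalIntegral.integral_hasDerivAt_right hI
      (hgcont.stronglyMeasurableAtFilter hIoo_open w hwmem)
      ((hgcont w hwmem).continuousAt (hIoo_open.mem_nhds hwmem))
  have hE : HasDerivAt (fun u => -(2/bF) * ∫ z in (0:ℝ)..u, (z - wd)/(1 - z^2)^2)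
      (-(2/bF) * ((w - wd)/(1 - w^2)^2)) w := hderivInt.const_mul _
  have hG : HasDerivAt
      (fun u => aF * Real.exp (-(2/bF) * ∫ z in (0:ℝ)..u, (z - wd)/(1 - z^2)^2))
      (aF * (Real.exp (-(2/bF) * ∫ z in (0:ℝ)..w, (z - wd)/(1 - z^2)^2)
        * (-(2/bF) * ((w - wd)/(1 - w^2)^2)))) w := (hE.exp).const_mul aF
  have hEq : (fun x => (1 - x^2)^2 * steadyState aF bF wd x)
      =ᶠ[nhds w] (fun u => aF * Real.exp (-(2/bF) * ∫ z in (0:ℝ)..u, (z - wd)/(1 - z^2)^2)) := by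
    filter_upwards [hIoo_open.mem_nhds hwmem] with x hx
    have hx1 : 0 < 1 - x^2 := by nlinarith [hx.1, hx.2]
    have hx2 : (1 - x^2)^2 ≠ 0 := by positivity
    unfold steadyState
    field_simp
  have hF : HasDerivAt (fun x => (1 - x^2)^2 * steadyState aF bF wd x)
      (aF * (Real.exp (-(2/bF) * ∫ z in (0:ℝ)..w, (z - wd)/(1 - z^2)^2)
        * (-(2/bF) * ((w - wd)/(1 - w^2)^2)))) w := hG.congr_of_eventuallyEq hEq
  refine ⟨hF.differentiableAt, ?_⟩
  rw [hF.deriv]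
  unfold steadyState
  have h1' : 0 < 1 - w^2 := by nlinarith
  have h1 : (1:ℝ) - w^2 ≠ 0 := ne_of_gt h1'
  have h2 : cFL + cF*ρ ≠ 0 := by positivity
  have h3 : ς2*cFL + ςh2*cF*ρ ≠ 0 := by positivity
  subst hbF
  field_simp
  ring
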